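/- For every d ≥ 1 there is a constant c_d > 0 depending only on d such that every convex body K ⊆ ℝ^d whose interior contains the origin satisfies vol(K) · vol(K°) ≥ c_d, where vol denotes Lebesgue measure on ℝ^d. -/

import Mathlib

open MeasureTheory Metric Set
open scoped RealInnerProductSpace ENNReal

/-- Mahler volume bound: for every `d ≥ 1` there is `c_d > 0` such that
every convex body `K ⊆ ℝ^d` whose interior contains the origin satisfies
`vol(K) · vol(K°) ≥ c_d`. -/
theorem mahler_volume_lower_bound (d : ℕ) (hd : 1 ≤ d) :
    ∃ c : ℝ, 0 < c ∧
      ∀ (K : Set (EuclideanSpace ℝ (Fin d))),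
        IsCompact K → Convex ℝ K → (0 : EuclideanSpace ℝ (Fin d)) ∈ interior K →
        c ≤ (volume K).toReal *
            (volume {x : EuclideanSpace ℝ (Fin d) | ∀ y ∈ K, ⟪x, y⟫ ≤ 1}).toReal := by
  classical
  set b : Module.Basis (Fin d) ℝ (EuclideanSpace ℝ (Fin d)) := (EuclideanSpace.basisFun (Fin d) ℝ).toBasis with hbdef
  have hbs : ∀ i, b i = EuclideanSpace.single i 1 := by
    intro i; simp [hbdef, EuclideanSpace.basisFun_apply]
  set S0 : Set (EuclideanSpace ℝ (Fin d)) := insert 0 (Set.range fun i => b i) with hS0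
  set Δ : Set (EuclideanSpace ℝ (Fin d)) := convexHull ℝ S0 with hΔ
  -- affine span is everything
  have hspan : affineSpan ℝ S0 = ⊤ := by
    rw [AffineSubspace.affineSpan_eq_top_iff_vectorSpan_eq_top_of_nonempty ℝ _ _
      ⟨0, mem_insert _ _⟩]
    rw [eq_top_iff, ← b.span_eq]
    refine Submodule.span_le.2 ?_
    rintro x ⟨i, rfl⟩
    have := vsub_mem_vectorSpan ℝ (p₁ := b i) (p₂ := (0 : EuclideanSpace ℝ (Fin d))) (s := S0)
      (subset_insert _ _ ⟨i, rfl⟩) (mem_insert _ _)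
    simpa using this
  have hΔfin : volume Δ < ⊤ :=
    (((Set.finite_range _).insert _).isCompact_convexHull ℝ).measure_lt_top
  have hΔpos : 0 < volume Δ := by
    have hconv := convex_convexHull ℝ S0
    have hne : (interior Δ).Nonempty := by
      rw [hΔ, hconv.interior_nonempty_iff_affineSpan_eq_top, affineSpan_convexHull]
      exact hspan
    calc (0:ℝ≥0∞) < volume (interior Δ) := isOpen_interior.measure_pos _ hne
      _ ≤ _ := measure_mono interior_subset
  set t := (volume Δ).toReal with htdef
  have ht : 0 < t := ENNReal.toReal_pos hΔpos.ne' hΔfin.ne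
  refine ⟨t ^ 2, by positivity, ?_⟩
  intro K hKc hKconv h0K
  set P : Set (EuclideanSpace ℝ (Fin d)) := {x : EuclideanSpace ℝ (Fin d) | ∀ y ∈ K, ⟪x, y⟫ ≤ 1} with hP
  have h0mem : (0 : EuclideanSpace ℝ (Fin d)) ∈ K := interior_subset h0K
  obtain ⟨ε, hε, hball⟩ : ∃ ε > 0, ball (0 : EuclideanSpace ℝ (Fin d)) ε ⊆ K := by
    rw [mem_interior_iff_mem_nhds] at h0K
    exact Metric.mem_nhds_iff.1 h0K
  -- maximizing the determinant over tuples from K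
  set T : Set (Fin d → EuclideanSpace ℝ (Fin d)) := {v | ∀ i, v i ∈ K} with hT
  have hTc : IsCompact T := by
    have := isCompact_univ_pi (fun _ : Fin d => hKc)
    simpa [Set.pi] using this
  have hTne : T.Nonempty := ⟨fun _ => 0, fun _ => h0mem⟩
  set F : (Fin d → EuclideanSpace ℝ (Fin d)) → ℝ := fun v => |(Matrix.of fun i j => v i j).det| with hF
  have hFc : Continuous F := by
    refine continuous_abs.comp (Continuous.matrix_det ?_)
    exact continuous_pi fun i => continuous_pi fun j =>
      (continuous_apply j).comp ((PiLp.continuous_ofLp ..).comp (continuous_apply i))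
  obtain ⟨v, hvT, hvmax⟩ := hTc.exists_isMaxOn hTne hFc.continuousOn
  set M : Matrix (Fin d) (Fin d) ℝ := Matrix.of fun i j => v i j with hM
  set D : ℝ := |M.det| with hDdef
  have hD : 0 < D := by
    have hu : (fun i => EuclideanSpace.single i (ε/2) : Fin d → EuclideanSpace ℝ (Fin d)) ∈ T := by
      intro i
      apply hball
      rw [mem_ball_zero_iff]
      rw [EuclideanSpace.norm_single, Real.norm_eq_abs, abs_of_pos (by linarith)]
      linarith
    have hle := hvmax hu
    have heq : (Matrix.of fun i j => (EuclideanSpace.single i (ε/2) : EuclideanSpace ℝ (Fin d)) j)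
        = Matrix.diagonal (fun _ => ε/2) := by
      ext i j
      by_cases h : i = j <;> simp [EuclideanSpace.single_apply, Matrix.diagonal, h, eq_comm]
    have : F (fun i => EuclideanSpace.single i (ε/2)) = (ε/2)^d := by
      rw [hF]; simp only [heq, Matrix.det_diagonal, Finset.prod_const]
      rw [Finset.card_univ, Fintype.card_fin, abs_pow, abs_of_pos (by linarith)]
    have hle' : F (fun i => EuclideanSpace.single i (ε/2)) ≤ D := hle
    rw [this] at hle'
    calc (0:ℝ) < (ε/2)^d := by positivity
      _ ≤ D := hle'
  have hDne : M.det ≠ 0 := by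
    intro h
    rw [hDdef, h, abs_zero] at hD
    exact lt_irrefl _ hD
  -- the key maximality consequence
  have key : ∀ i : Fin d, ∀ y : EuclideanSpace ℝ (Fin d), y ∈ K → |(M.updateRow i (fun j => y j)).det| ≤ D := by
    intro i y hy
    have hmem : Function.update v i y ∈ T := by
      intro k
      by_cases hk : k = i
      · subst hk; simpa using hy
      · simpa [Function.update_of_ne hk] using hvT k
    have hle := hvmax hmem
    have heq : (Matrix.of fun k j => (Function.update v i y) k j)
        = M.updateRow i (fun j => y j) := by
      ext k j
      by_cases hk : k = i
      · subst hk; simp [Matrix.updateRow_self]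
      · simp [Function.update_of_ne hk, Matrix.updateRow_ne hk, hM]
    have hle' : |(Matrix.of fun k j => (Function.update v i y) k j).det| ≤ D := hle
    rwa [heq] at hle'
  -- the adjugate identity
  have adj_id : ∀ i : Fin d, ∀ y : EuclideanSpace ℝ (Fin d),
      ∑ j, Matrix.adjugate M j i * y j = (M.updateRow i (fun j => y j)).det := by
    intro i y
    rw [← Matrix.cramer_transpose_apply, Matrix.cramer_eq_adjugate_mulVec,
      ← Matrix.adjugate_transpose]
    simp [Matrix.mulVec, dotProduct, mul_comm]
  have inner_eq : ∀ x y : EuclideanSpace ℝ (Fin d), ⟪x, y⟫ = ∑ i, x i * y i := by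
    intro x y; simp [PiLp.inner_apply, RCLike.inner_apply, mul_comm]
  -- the two linear maps
  set fV : EuclideanSpace ℝ (Fin d) →ₗ[ℝ] EuclideanSpace ℝ (Fin d) := Matrix.toEuclideanLin M.transpose with hfV
  set fW : EuclideanSpace ℝ (Fin d) →ₗ[ℝ] EuclideanSpace ℝ (Fin d) := Matrix.toEuclideanLin (D⁻¹ • M.adjugate) with hfW
  have htoLin : ∀ (A : Matrix (Fin d) (Fin d) ℝ) (j k : Fin d),
      (Matrix.toEuclideanLin A) (EuclideanSpace.single j 1) k = A k j := by
    intro A j k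
    rw [Matrix.toEuclideanLin_apply]
    simp [Matrix.mulVec, dotProduct, EuclideanSpace.single_apply]
  -- image of Δ under fV is inside K
  have hV : fV '' Δ ⊆ K := by
    rw [image_subset_iff, hΔ]
    refine convexHull_min ?_ (hKconv.linear_preimage fV)
    rintro x (rfl | ⟨j, rfl⟩)
    · simpa using h0mem
    · have : fV (b j) = v j := by
        ext k
        rw [hbs j, hfV, htoLin]
        simp [hM]
      simpa [this] using hvT j
  -- image of Δ under fW is inside P
  have hPconv : Convex ℝ P := by
    intro x1 h1 x2 h2 a c ha hc hac
    intro y hy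
    have hx1 := h1 y hy
    have hx2 := h2 y hy
    rw [inner_add_left, real_inner_smul_left, real_inner_smul_left]
    nlinarith
  have hW : fW '' Δ ⊆ P := by
    rw [image_subset_iff, hΔ]
    refine convexHull_min ?_ (hPconv.linear_preimage fW)
    rintro x (rfl | ⟨j, rfl⟩)
    · have : fW (0 : EuclideanSpace ℝ (Fin d)) = 0 := map_zero _
      rw [mem_preimage, this]
      intro y hy
      simp [inner_eq]
    · rw [mem_preimage]
      intro y hy
      have hc : ∀ k, fW (b j) k = D⁻¹ * Matrix.adjugate M k j := by
        intro k
        rw [hbs j, hfW, htoLin]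
        simp [Matrix.smul_apply, smul_eq_mul]
      rw [inner_eq]
      have : ∑ k, fW (b j) k * y k = D⁻¹ * ∑ k, Matrix.adjugate M k j * y k := by
        rw [Finset.mul_sum]
        exact Finset.sum_congr rfl fun k _ => by rw [hc k]; ring
      rw [this, adj_id j y]
      have hbound := key j y hy
      have h1 : (M.updateRow j (fun k => y k)).det ≤ D :=
        le_trans (le_abs_self _) hbound
      have h2 : (0:ℝ) ≤ D⁻¹ := by positivity
      calc D⁻¹ * (M.updateRow j (fun k => y k)).det ≤ D⁻¹ * D := by
            exact mul_le_mul_of_nonneg_left h1 h2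
        _ = 1 := inv_mul_cancel₀ (ne_of_gt hD)
  -- P has finite volume
  have hPsub : P ⊆ closedBall (0 : EuclideanSpace ℝ (Fin d)) (2/ε) := by
    intro x hx
    rw [mem_closedBall_zero_iff]
    by_cases hx0 : x = 0
    · rw [hx0, norm_zero]; positivity
    · have hxn : (0:ℝ) < ‖x‖ := norm_pos_iff.2 hx0
      set y : EuclideanSpace ℝ (Fin d) := (ε/2 * ‖x‖⁻¹) • x with hy
      have hyK : y ∈ K := by
        apply hball
        rw [mem_ball_zero_iff, hy, norm_smul]
        rw [Real.norm_eq_abs, abs_of_pos (by positivity)]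
        rw [mul_assoc, inv_mul_cancel₀ hxn.ne', mul_one]
        linarith
      have := hx y hyK
      rw [hy, real_inner_smul_right, real_inner_self_eq_norm_mul_norm] at this
      have e : ε/2 * ‖x‖⁻¹ * (‖x‖ * ‖x‖) = ε/2 * ‖x‖ := by
        field_simp
      rw [e] at this
      rw [le_div_iff₀ hε]
      nlinarith [this]
  have hPfin : volume P < ⊤ :=
    lt_of_le_of_lt (measure_mono hPsub) (measure_closedBall_lt_top)
  have hKfin : volume K < ⊤ := hKc.measure_lt_top
  -- volume lower bounds
  have hvolV : ENNReal.ofReal D * volume Δ ≤ volume K := by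
    have himg : volume (fV '' Δ) = ENNReal.ofReal D * volume Δ := by
      rw [hfV, Measure.addHaar_image_linearMap]
      congr 2
      rw [Matrix.toEuclideanLin_eq_toLin_orthonormal, LinearMap.det_toLin,
        Matrix.det_transpose]
    rw [← himg]
    exact measure_mono hV
  have hdetW : |((D:ℝ)⁻¹ • M.adjugate).det| = D⁻¹ := by
    have hdd : d = (d - 1) + 1 := (Nat.succ_pred_eq_of_pos hd).symm
    rw [Matrix.det_smul, Matrix.det_adjugate, Fintype.card_fin, abs_mul, abs_pow, abs_inv,
      abs_abs, abs_pow, ← hDdef]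
    have hDne' : (D:ℝ) ≠ 0 := hD.ne'
    field_simp
    have hpow : D ^ d = D * D ^ (d - 1) := by rw [← pow_succ', ← hdd]
    rw [one_div, inv_pow, hpow]
    field_simp
  have hvolW : ENNReal.ofReal D⁻¹ * volume Δ ≤ volume P := by
    have himg : volume (fW '' Δ) = ENNReal.ofReal D⁻¹ * volume Δ := by
      rw [hfW, Measure.addHaar_image_linearMap]
      congr 2
      rw [Matrix.toEuclideanLin_eq_toLin_orthonormal, LinearMap.det_toLin]
      exact hdetW
    rw [← himg]
    exact measure_mono hW
  -- conclude
  have h1 : D * t ≤ (volume K).toReal := by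
    have := ENNReal.toReal_mono hKfin.ne hvolV
    rwa [ENNReal.toReal_mul, ENNReal.toReal_ofReal hD.le] at this
  have h2 : D⁻¹ * t ≤ (volume P).toReal := by
    have := ENNReal.toReal_mono hPfin.ne hvolW
    rwa [ENNReal.toReal_mul, ENNReal.toReal_ofReal (by positivity)] at this
  calc t ^ 2 = (D * t) * (D⁻¹ * t) := by
        rw [mul_mul_mul_comm, mul_inv_cancel₀ hD.ne', one_mul, pow_two]
    _ ≤ (volume K).toReal * (volume P).toReal :=
        mul_le_mul h1 h2 (mul_nonneg (inv_nonneg.2 hD.le) ht.le) ENNReal.toReal_nonneg
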